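/- Let ν be a centered compactly supported probability measure with variance m^{(2)}(ν), ϑ(λ) the largest solution of ∫ dν(v)/(λv−ϑ)² = 1 with ϑ − λv bounded below on supp ν, and m_fc(E₊) = ∫ dν(v)/(λv − ϑ). Then as λ → 0, m_fc(E₊) = −1 + (λ² m^{(2)}(ν))/2 + O(λ³), and consequently 1 − (m_fc(E₊))² = λ² m^{(2)}(ν) + O(λ³). -/

import Mathlib

open MeasureTheory Filter Topology Asymptotics

private lemma stmt7_alg2 (θ X : ℝ) (hθ : θ ≠ 0) (ha : θ - X ≠ 0) :
    1/(X-θ)^2 - (1/θ^2 + 2*X/θ^3 + 3*X^2/θ^4) = X^3*(4*θ-3*X)/(θ^4*(θ-X)^2) := by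
  have h : (X - θ)^2 = (θ - X)^2 := by ring
  rw [h]; field_simp; ring

private lemma stmt7_alg1 (θ X : ℝ) (hθ : θ ≠ 0) (ha : θ - X ≠ 0) :
    1/(X-θ) + (1/θ + X/θ^2 + X^2/θ^3) = -(X^3/(θ^3*(θ-X))) := by
  have ha' : X - θ ≠ 0 := fun h => ha (by linarith [sub_eq_zero.mp h])
  field_simp
  ring

private lemma stmt7_bd2 (θ X b : ℝ) (hθ1 : 3/4 ≤ θ) (hθ2 : θ ≤ 5/4) (ha : 1/2 ≤ θ - X)
    (hX : |X| ≤ b) (hb : b ≤ 1/4) :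
    |X^3*(4*θ-3*X)/(θ^4*(θ-X)^2)| ≤ 112*b^3 := by
  have hb0 : 0 ≤ b := le_trans (abs_nonneg X) hX
  have hX' := abs_le.mp hX
  have hden : (1:ℝ)/16 ≤ θ^4*(θ-X)^2 := by
    have h1 : ((3:ℝ)/4)^4 ≤ θ^4 := pow_le_pow_left₀ (by norm_num) hθ1 4
    have h2 : ((1:ℝ)/2)^2 ≤ (θ-X)^2 := pow_le_pow_left₀ (by norm_num) ha 2
    nlinarith
  have hnum : |X^3*(4*θ-3*X)| ≤ 7*b^3 := by
    rw [abs_mul, abs_pow]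
    have h7 : |4*θ-3*X| ≤ 7 := by rw [abs_le]; constructor <;> nlinarith
    calc |X|^3 * |4*θ-3*X| ≤ b^3 * 7 :=
          mul_le_mul (pow_le_pow_left₀ (abs_nonneg X) hX 3) h7 (abs_nonneg _) (by positivity)
    _ = 7*b^3 := by ring
  rw [abs_div, abs_of_nonneg (le_trans (by norm_num) hden)]
  calc |X^3*(4*θ-3*X)| / (θ^4*(θ-X)^2) ≤ (7*b^3) / (1/16) :=
        div_le_div₀ (by positivity) hnum (by norm_num) hden
  _ = 112*b^3 := by ring

private lemma stmt7_u2 (θ u z : ℝ) (hθ : θ ≠ 0) (hu : u = 1/θ) :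
    1/θ^2 + z/θ^4 - 1 = u^2 + z*u^4 - 1 := by
  subst hu; field_simp

private lemma stmt7_u1 (θ u z : ℝ) (hθ : θ ≠ 0) (hu : u = 1/θ) :
    1/θ + z/θ^3 = u + z*u^3 := by
  subst hu; field_simp

private lemma stmt7_bd1 (θ X b : ℝ) (hθ1 : 3/4 ≤ θ) (hθ2 : θ ≤ 5/4) (ha : 1/2 ≤ θ - X)
    (hX : |X| ≤ b) (hb : b ≤ 1/4) :
    |X^3/(θ^3*(θ-X))| ≤ 8*b^3 := by
  have hb0 : 0 ≤ b := le_trans (abs_nonneg X) hX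
  have hden : (1:ℝ)/8 ≤ θ^3*(θ-X) := by
    have h1 : ((3:ℝ)/4)^3 ≤ θ^3 := pow_le_pow_left₀ (by norm_num) hθ1 3
    nlinarith
  have hnum : |X^3| ≤ b^3 := by
    rw [abs_pow]; exact pow_le_pow_left₀ (abs_nonneg X) hX 3
  rw [abs_div, abs_of_nonneg (le_trans (by norm_num) hden)]
  calc |X^3| / (θ^3*(θ-X)) ≤ b^3 / (1/8) :=
        div_le_div₀ (by positivity) hnum (by norm_num) hden
  _ = 8*b^3 := by ring

set_option maxHeartbeats 1000000 in
private lemma stmt7_arith (M lam m₂ θ m : ℝ) (hM : 1 ≤ M) (hlam : 0 < lam) (hlam1 : lam ≤ 1)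
    (hlamM : lam * M ≤ 1/4) (hm₂0 : 0 ≤ m₂) (hm₂M : m₂ ≤ M^2)
    (hθ34 : 3/4 ≤ θ) (hθ54 : θ ≤ 5/4) (hθ0 : θ ≠ 0)
    (hI2 : |1/θ^2 + 3*lam^2*m₂/θ^4 - 1| ≤ 112*M^3*lam^3)
    (hI1 : |m + (1/θ + lam^2*m₂/θ^3)| ≤ 8*M^3*lam^3) :
    |m - (-1 + lam^2*m₂/2)| ≤ 10^7*M^10*lam^3 ∧
    |(1 - m^2) - lam^2*m₂| ≤ 10^7*M^10*lam^3 := by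
  have hM0 : (0:ℝ) < M := lt_of_lt_of_le one_pos hM
  obtain ⟨u, hudef⟩ : ∃ u : ℝ, u = 1/θ := ⟨_, rfl⟩
  have hu1 : 4/5 ≤ u := by
    rw [hudef, le_div_iff₀ (by linarith : (0:ℝ) < θ)]; linarith
  have hu2 : u ≤ 4/3 := by
    rw [hudef, div_le_iff₀ (by linarith : (0:ℝ) < θ)]; linarith
  have h2 : |u^2 + 3*lam^2*m₂*u^4 - 1| ≤ 112*M^3*lam^3 := by
    rwa [stmt7_u2 θ u (3*lam^2*m₂) hθ0 hudef] at hI2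
  have h1 : |m + (u + lam^2*m₂*u^3)| ≤ 8*M^3*lam^3 := by
    rwa [stmt7_u1 θ u (lam^2*m₂) hθ0 hudef] at hI1
  have hl32 : lam^3 ≤ lam^2 := pow_le_pow_of_le_one hlam.le hlam1 (by norm_num)
  have hl43 : lam^4 ≤ lam^3 := pow_le_pow_of_le_one hlam.le hlam1 (by norm_num)
  have hlM2 : lam^2*M^2 ≤ 1/16 := by
    have h := mul_self_le_mul_self (mul_pos hlam hM0).le hlamM
    linarith only [h]
  have hl2mM : lam^2*m₂ ≤ lam^2*M^2 := mul_le_mul_of_nonneg_left hm₂M (sq_nonneg lam)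
  have hl2m : lam^2*m₂ ≤ 1/16 := le_trans hl2mM hlM2
  have hl2m0 : 0 ≤ lam^2*m₂ := by positivity
  have hM23 : M^2 ≤ M^3 := pow_le_pow_right₀ hM (by norm_num)
  have hM25 : M^2 ≤ M^5 := pow_le_pow_right₀ hM (by norm_num)
  have hM35 : M^3 ≤ M^5 := pow_le_pow_right₀ hM (by norm_num)
  have hM45 : M^4 ≤ M^5 := pow_le_pow_right₀ hM (by norm_num)
  have hM510 : M^5 ≤ M^10 := pow_le_pow_right₀ hM (by norm_num)
  have f1 : M^3*lam^3 ≤ M^5*lam^3 := mul_le_mul_of_nonneg_right hM35 (by positivity)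
  have f2 : M^5*lam^4 ≤ M^5*lam^3 := mul_le_mul_of_nonneg_left hl43 (by positivity)
  have f3 : M^5*lam^3 ≤ M^10*lam^3 := mul_le_mul_of_nonneg_right hM510 (by positivity)
  have f4 : M^5*lam^3 ≤ M^5*lam^2 := mul_le_mul_of_nonneg_left hl32 (by positivity)
  have f5 : M^10*lam^4 ≤ M^10*lam^3 := mul_le_mul_of_nonneg_left hl43 (by positivity)
  have f6 : M^3*lam^3 ≤ M^3*lam^2 := mul_le_mul_of_nonneg_left hl32 (by positivity)
  have g23 : lam^2*M^2 ≤ lam^2*M^3 := mul_le_mul_of_nonneg_left hM23 (sq_nonneg lam)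
  have p1 : (0:ℝ) ≤ M^3*lam^2 := by positivity
  have p2 : (0:ℝ) ≤ M^3*lam^3 := by positivity
  have p3 : (0:ℝ) ≤ M^5*lam^3 := by positivity
  have p4 : (0:ℝ) ≤ M^5*lam^2 := by positivity
  have p5 : (0:ℝ) ≤ M^10*lam^3 := by positivity
  have p6 : (0:ℝ) ≤ M^10*lam^4 := by positivity
  have p7 : (0:ℝ) ≤ M^5*lam^4 := by positivity
  have hu0 : (0:ℝ) < u := by linarith
  have hu2sq : u^2 ≤ 16/9 := by
    have h := mul_self_le_mul_self (by linarith : (0:ℝ) ≤ u) hu2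
    linarith only [h]
  have hu4 : u^4 ≤ 256/81 := by
    calc u^4 ≤ (4/3:ℝ)^4 := pow_le_pow_left₀ (by linarith) hu2 4
    _ ≤ 256/81 := by norm_num
  have h2' := abs_le.mp h2
  have h1' := abs_le.mp h1
  have hprod : lam^2*m₂*u^4 ≤ lam^2*M^2*(256/81) :=
    mul_le_mul hl2mM hu4 (by positivity) (by positivity)
  have hprod0 : 0 ≤ lam^2*m₂*u^4 := by positivity
  -- |u^2 - 1| small
  have s0 : |u^2 - 1| ≤ 122*M^3*lam^2 := by
    rw [abs_le]
    constructor
    · linarith only [h2'.1, hprod, f6, g23, p1, p2, p3, p4, p5, p6, p7]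
    · linarith only [h2'.2, hprod0, f6, p1, p2, p3, p4, p5, p6, p7]
  have s0' := abs_le.mp s0
  -- |u - 1| small
  have s1 : |u - 1| ≤ 122*M^3*lam^2 := by
    calc |u - 1| = |u - 1| * 1 := (mul_one _).symm
    _ ≤ |u - 1| * (u + 1) := by
        apply mul_le_mul_of_nonneg_left (by linarith) (abs_nonneg _)
    _ = |u - 1| * |u + 1| := by rw [abs_of_pos (by linarith : (0:ℝ) < u + 1)]
    _ = |u^2 - 1| := by rw [← abs_mul]; ring_nf
    _ ≤ 122*M^3*lam^2 := s0
  have s1' := abs_le.mp s1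
  -- |u^4 - 1| small
  have hq : |u^4 - 1| ≤ 366*M^3*lam^2 := by
    calc |u^4 - 1| = |u^2 - 1| * |u^2 + 1| := by rw [← abs_mul]; ring_nf
    _ ≤ (122*M^3*lam^2) * 3 := by
        apply mul_le_mul s0 ?_ (abs_nonneg _) (by positivity)
        rw [abs_of_pos (by positivity)]
        linarith only [hu2sq, p1, p2, p3, p4, p5, p6, p7]
    _ = 366*M^3*lam^2 := by ring
  -- second order for u^2
  have s2 : |u^2 - (1 - 3*lam^2*m₂)| ≤ 1210*M^5*lam^3 := by
    have hcross : |lam^2*m₂*(u^4-1)| ≤ 366*M^5*lam^4 := by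
      rw [abs_mul, abs_of_nonneg hl2m0]
      calc lam^2*m₂ * |u^4-1| ≤ (lam^2*M^2) * (366*M^3*lam^2) :=
            mul_le_mul hl2mM hq (abs_nonneg _) (by positivity)
      _ = 366*M^5*lam^4 := by ring
    have hcross' := abs_le.mp hcross
    have e : u^2 - (1 - 3*lam^2*m₂) = (u^2 + 3*lam^2*m₂*u^4 - 1) - 3*(lam^2*m₂*(u^4-1)) := by
      ring
    rw [abs_le, e]
    constructor
    · linarith only [h2'.1, hcross'.2, f1, f2, p1, p2, p3, p4, p5, p6, p7]
    · linarith only [h2'.2, hcross'.1, f1, f2, p1, p2, p3, p4, p5, p6, p7]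
  have s2' := abs_le.mp s2
  -- second order for u
  have s3 : |u - (1 - 3*lam^2*m₂/2)| ≤ 1213*M^5*lam^3 := by
    have hw1 : (1:ℝ) ≤ u + (1 - 3*lam^2*m₂/2) := by linarith only [hu1, hl2m, p1, p2, p3, p4, p5, p6, p7]
    have hm4 : (9/4)*((lam^2*m₂)*(lam^2*m₂)) ≤ 3*M^5*lam^3 := by
      have g1 : (lam^2*m₂)*(lam^2*m₂) ≤ (lam^2*M^2)*(lam^2*M^2) :=
        mul_le_mul hl2mM hl2mM hl2m0 (by positivity)
      have g2 : (lam^4)*(M^4) ≤ (lam^3)*(M^5) :=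
        mul_le_mul hl43 hM45 (by positivity) (by positivity)
      linarith only [g1, g2, p1, p2, p3, p4, p5, p6, p7]
    have hsq : |u^2 - (1 - 3*lam^2*m₂/2)^2| ≤ 1213*M^5*lam^3 := by
      have e : u^2 - (1 - 3*lam^2*m₂/2)^2
          = (u^2 - (1 - 3*lam^2*m₂)) - (9/4)*((lam^2*m₂)*(lam^2*m₂)) := by ring
      rw [abs_le, e]
      constructor
      · linarith only [s2'.1, hm4, p1, p2, p3, p4, p5, p6, p7]
      · linarith only [s2'.2, mul_nonneg hl2m0 hl2m0, p1, p2, p3, p4, p5, p6, p7]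
    calc |u - (1 - 3*lam^2*m₂/2)| = |u - (1 - 3*lam^2*m₂/2)| * 1 := (mul_one _).symm
    _ ≤ |u - (1 - 3*lam^2*m₂/2)| * (u + (1 - 3*lam^2*m₂/2)) := by
        apply mul_le_mul_of_nonneg_left hw1 (abs_nonneg _)
    _ = |u - (1 - 3*lam^2*m₂/2)| * |u + (1 - 3*lam^2*m₂/2)| := by
        rw [abs_of_pos (by linarith only [hw1, p1, p2, p3, p4, p5, p6, p7] : (0:ℝ) < u + (1 - 3*lam^2*m₂/2))]
    _ = |u^2 - (1 - 3*lam^2*m₂/2)^2| := by rw [← abs_mul]; ring_nf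
    _ ≤ 1213*M^5*lam^3 := hsq
  have s3' := abs_le.mp s3
  -- cubic term
  have hcub : |1 - u^3| ≤ 610*M^3*lam^2 := by
    calc |1 - u^3| = |1 - u| * |1 + u + u^2| := by rw [← abs_mul]; ring_nf
    _ ≤ (122*M^3*lam^2) * 5 := by
        apply mul_le_mul ?_ ?_ (abs_nonneg _) (by positivity)
        · rw [abs_sub_comm]; exact s1
        · rw [abs_of_pos (by linarith only [hu1, sq_nonneg u, p1, p2, p3, p4, p5, p6, p7])]
          linarith only [hu2, hu2sq, p1, p2, p3, p4, p5, p6, p7]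
    _ = 610*M^3*lam^2 := by ring
  have hcub2 : |lam^2*m₂*(1 - u^3)| ≤ 610*M^5*lam^4 := by
    rw [abs_mul, abs_of_nonneg hl2m0]
    calc lam^2*m₂ * |1-u^3| ≤ (lam^2*M^2) * (610*M^3*lam^2) :=
          mul_le_mul hl2mM hcub (abs_nonneg _) (by positivity)
    _ = 610*M^5*lam^4 := by ring
  have hcub2' := abs_le.mp hcub2
  -- first conclusion
  have final1 : |m - (-1 + lam^2*m₂/2)| ≤ 2000*M^5*lam^3 := by
    have e : m - (-1 + lam^2*m₂/2)
        = -(u - (1 - 3*lam^2*m₂/2)) + lam^2*m₂*(1 - u^3) + (m + (u + lam^2*m₂*u^3)) := by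
      ring
    rw [abs_le, e]
    constructor
    · linarith only [s3'.2, hcub2'.1, h1'.1, f1, f2, p1, p2, p3, p4, p5, p6, p7]
    · linarith only [s3'.1, hcub2'.2, h1'.2, f1, f2, p1, p2, p3, p4, p5, p6, p7]
  have final1' := abs_le.mp final1
  have hpos53 : (0:ℝ) ≤ M^5*lam^3 := by positivity
  constructor
  · refine final1.trans ?_
    linarith only [f3, hpos53, p1, p2, p3, p4, p5, p6, p7]
  · have hδ : |lam^2*m₂/2 + (m - (-1 + lam^2*m₂/2))| ≤ 2001*M^5*lam^2 := by
      have g1 : lam^2*M^2 ≤ lam^2*M^5 := mul_le_mul_of_nonneg_left hM25 (sq_nonneg lam)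
      calc |lam^2*m₂/2 + (m - (-1 + lam^2*m₂/2))|
          ≤ |lam^2*m₂/2| + |m - (-1 + lam^2*m₂/2)| := abs_add_le _ _
      _ ≤ lam^2*M^2/2 + 2000*M^5*lam^3 := by
          rw [abs_of_nonneg (by positivity)]
          exact add_le_add (by linarith only [hl2mM, p1, p2, p3, p4, p5, p6, p7]) final1
      _ ≤ 2001*M^5*lam^2 := by linarith only [g1, f4, p1, p2, p3, p4, p5, p6, p7]
    have hδ2 : (lam^2*m₂/2 + (m - (-1 + lam^2*m₂/2)))^2 ≤ 4004001*(M^10*lam^4) := by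
      have h := pow_le_pow_left₀ (abs_nonneg _) hδ 2
      rw [sq_abs] at h
      linarith only [h]
    have e : (1 - m^2) - lam^2*m₂
        = 2*(m - (-1 + lam^2*m₂/2)) - (lam^2*m₂/2 + (m - (-1 + lam^2*m₂/2)))^2 := by ring
    rw [abs_le, e]
    constructor
    · linarith only [final1'.1, hδ2, f3, f5, p1, p2, p3, p4, p5, p6, p7]
    · linarith only [final1'.2, sq_nonneg (lam^2*m₂/2 + (m - (-1 + lam^2*m₂/2))), f3, f5, hpos53, p1, p2, p3, p4, p5, p6, p7]

set_option maxHeartbeats 1000000 in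
lemma stmt7_key
    (ν : Measure ℝ) (hprob : IsProbabilityMeasure ν)
    (s : Set ℝ) (hae : ∀ᵐ v ∂ν, v ∈ s)
    (hcentered : ∫ v, v ∂ν = 0)
    (M : ℝ) (hM : 1 ≤ M) (hMs : ∀ v ∈ s, |v| ≤ M)
    (c lam θ : ℝ) (hc : 0 < c) (hlam : 0 < lam)
    (hlamM : lam * M ≤ 1/4)
    (hθpos : 0 < θ)
    (hsol : ∫ v, 1 / (lam * v - θ) ^ 2 ∂ν = 1)
    (hgap : ∀ v ∈ s, c ≤ θ - lam * v) :
    |(∫ v, 1 / (lam * v - θ) ∂ν) - (-1 + lam ^ 2 * (∫ v, v ^ 2 ∂ν) / 2)| ≤ 10^7 * M^10 * lam^3 ∧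
    |(1 - (∫ v, 1 / (lam * v - θ) ∂ν) ^ 2) - lam ^ 2 * (∫ v, v ^ 2 ∂ν)| ≤ 10^7 * M^10 * lam^3 := by
  have hM0 : (0:ℝ) < M := lt_of_lt_of_le one_pos hM
  have hlam1 : lam ≤ 1 := by nlinarith
  -- generic integrability/bound helper
  have key : ∀ (f : ℝ → ℝ), Measurable f → ∀ C : ℝ, (∀ v ∈ s, |f v| ≤ C) → Integrable f ν := by
    intro f hf C hC
    refine Integrable.mono' (integrable_const C) hf.aestronglyMeasurable ?_
    filter_upwards [hae] with v hv
    simpa using hC v hv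
  have keybd : ∀ (f : ℝ → ℝ) (C : ℝ), (∀ v ∈ s, |f v| ≤ C) → |∫ v, f v ∂ν| ≤ C := by
    intro f C hC
    have := norm_integral_le_of_norm_le_const (μ := ν) (f := f) (C := C) ?_
    · simpa [measure_univ] using this
    · filter_upwards [hae] with v hv; simpa using hC v hv
  -- measurability of the main integrands
  have measa : Measurable fun v : ℝ => lam * v - θ :=
    (measurable_const.mul measurable_id).sub measurable_const
  have meas1 : Measurable fun v : ℝ => 1 / (lam * v - θ) := by
    simp only [one_div]; exact measa.inv
  have meas2 : Measurable fun v : ℝ => 1 / (lam * v - θ) ^ 2 := by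
    simp only [one_div]; exact (measa.pow_const 2).inv
  -- integrability of basic moments
  have int_id : Integrable (fun v : ℝ => v) ν := key _ measurable_id M (fun v hv => hMs v hv)
  have int_sq : Integrable (fun v : ℝ => v ^ 2) ν := by
    refine key _ (measurable_id.pow_const 2) (M ^ 2) (fun v hv => ?_)
    have := hMs v hv
    rw [abs_pow]
    exact pow_le_pow_left₀ (abs_nonneg v) this 2
  set m₂ : ℝ := ∫ v, v ^ 2 ∂ν with hm₂def
  have hm₂0 : 0 ≤ m₂ := integral_nonneg fun v => sq_nonneg v
  have hm₂M : m₂ ≤ M ^ 2 := by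
    have := keybd (fun v => v ^ 2) (M ^ 2) (fun v hv => by
      rw [abs_pow]; exact pow_le_pow_left₀ (abs_nonneg v) (hMs v hv) 2)
    calc m₂ ≤ |m₂| := le_abs_self _
    _ ≤ M ^ 2 := this
  -- integrability of the two resolvent integrands
  have int1 : Integrable (fun v : ℝ => 1 / (lam * v - θ)) ν := by
    refine key _ meas1 (1/c) (fun v hv => ?_)
    have h := hgap v hv
    rw [abs_div, abs_one]
    have h1 : |lam * v - θ| = θ - lam * v := by
      rw [abs_sub_comm]; exact abs_of_nonneg (by linarith)
    rw [h1]
    exact one_div_le_one_div_of_le hc h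
  have int2 : Integrable (fun v : ℝ => 1 / (lam * v - θ) ^ 2) ν := by
    refine key _ meas2 (1/c^2) (fun v hv => ?_)
    have h := hgap v hv
    rw [abs_div, abs_one, abs_pow, abs_sub_comm, abs_of_nonneg (by linarith : (0:ℝ) ≤ θ - lam * v)]
    apply one_div_le_one_div_of_le (by positivity)
    exact pow_le_pow_left₀ (le_of_lt hc) h 2
  -- bounds on θ
  have hθub : θ ≤ 1 + lam * M := by
    rcases le_or_gt θ (lam * M) with h | h
    · nlinarith
    · have hd : 0 < θ - lam * M := by linarith
      have hpt : ∀ v ∈ s, 1 / (lam * v - θ) ^ 2 ≤ 1 / (θ - lam * M) ^ 2 := by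
        intro v hv
        have hv1 : lam * v ≤ lam * M :=
          mul_le_mul_of_nonneg_left (le_trans (le_abs_self v) (hMs v hv)) hlam.le
        have h1 : (lam * v - θ) ^ 2 = (θ - lam * v) ^ 2 := by ring
        rw [h1]
        apply one_div_le_one_div_of_le (by positivity)
        apply pow_le_pow_left₀ hd.le (by linarith) 2
      have hmono : (∫ v, 1 / (lam * v - θ) ^ 2 ∂ν) ≤ ∫ _v, 1 / (θ - lam * M) ^ 2 ∂ν := by
        refine integral_mono_ae int2 (integrable_const _) ?_
        filter_upwards [hae] with v hv using hpt v hv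
      rw [hsol, integral_const, probReal_univ] at hmono
      simp at hmono
      have hsq : (θ - lam * M) ^ 2 ≤ 1 := by
        have h2 : (0:ℝ) < (θ - lam * M) ^ 2 := by positivity
        have h3 : (1:ℝ) ≤ ((θ - lam * M) ^ 2)⁻¹ := by simpa [one_div] using hmono
        have h4 := mul_inv_cancel₀ (ne_of_gt h2)
        nlinarith
      nlinarith
  have hθlb : 1 - lam * M ≤ θ := by
    have hd : 0 < θ + lam * M := by nlinarith
    have hpt : ∀ v ∈ s, 1 / (θ + lam * M) ^ 2 ≤ 1 / (lam * v - θ) ^ 2 := by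
      intro v hv
      have hv1 : -(lam * M) ≤ lam * v := by
        have : -M ≤ v := by have := (abs_le.mp (hMs v hv)).1; linarith
        nlinarith
      have hg := hgap v hv
      have h1 : (lam * v - θ) ^ 2 = (θ - lam * v) ^ 2 := by ring
      rw [h1]
      apply one_div_le_one_div_of_le (pow_pos (by linarith : (0:ℝ) < θ - lam * v) 2)
      apply pow_le_pow_left₀ (by linarith) (by linarith) 2
    have hmono : (∫ _v, 1 / (θ + lam * M) ^ 2 ∂ν) ≤ ∫ v, 1 / (lam * v - θ) ^ 2 ∂ν := by
      refine integral_mono_ae (integrable_const _) int2 ?_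
      filter_upwards [hae] with v hv using hpt v hv
    rw [hsol, integral_const, probReal_univ] at hmono
    simp at hmono
    have hsq : 1 ≤ (θ + lam * M) ^ 2 := by
      have h2 : (0:ℝ) < (θ + lam * M) ^ 2 := by positivity
      have h3 : ((θ + lam * M) ^ 2)⁻¹ ≤ 1 := by simpa [one_div] using hmono
      have h4 := mul_inv_cancel₀ (ne_of_gt h2)
      nlinarith
    nlinarith
  have hθ34 : 3/4 ≤ θ := by linarith
  have hθ54 : θ ≤ 5/4 := by linarith
  have hθ0 : θ ≠ 0 := by linarith
  -- for v in s : basic bounds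
  have hXb : ∀ v ∈ s, |lam * v| ≤ lam * M := by
    intro v hv
    rw [abs_mul, abs_of_pos hlam]
    exact mul_le_mul_of_nonneg_left (hMs v hv) hlam.le
  have hha : ∀ v ∈ s, 1/2 ≤ θ - lam * v := by
    intro v hv
    have := (abs_le.mp (hXb v hv)).2
    linarith
  -- polynomial integrals
  have int_poly : ∀ c₀ c₁ c₂ : ℝ, Integrable (fun v => c₀ + c₁*v + c₂*v^2) ν :=
    fun c₀ c₁ c₂ => ((integrable_const c₀).add (int_id.const_mul c₁)).add (int_sq.const_mul c₂)
  have hpoly : ∀ c₀ c₁ c₂ : ℝ, (∫ v, (c₀ + c₁*v + c₂*v^2) ∂ν) = c₀ + c₂*m₂ := by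
    intro c₀ c₁ c₂
    have h1 : (∫ v, (c₀ + c₁*v + c₂*v^2) ∂ν) = (∫ v, (c₀ + c₁*v) ∂ν) + ∫ v, c₂*v^2 ∂ν :=
      integral_add ((integrable_const c₀).add (int_id.const_mul c₁)) (int_sq.const_mul c₂)
    have h2 : (∫ v, (c₀ + c₁*v) ∂ν) = (∫ _v, c₀ ∂ν) + ∫ v, c₁*v ∂ν :=
      integral_add (integrable_const c₀) (int_id.const_mul c₁)
    have h3 : (∫ v, c₁*v ∂ν) = c₁ * ∫ v, v ∂ν := integral_const_mul c₁ _
    have h4 : (∫ v, c₂*v^2 ∂ν) = c₂ * ∫ v, v^2 ∂ν := integral_const_mul c₂ _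
    rw [h1, h2, h3, h4, integral_const, hcentered, probReal_univ]
    simp [hm₂def]
  -- second-order expansion of the constraint
  have hI2 : |1/θ^2 + 3*lam^2*m₂/θ^4 - 1| ≤ 112*M^3*lam^3 := by
    have hsplit : (∫ v, (1/(lam*v-θ)^2 - (1/θ^2 + (2*lam/θ^3)*v + (3*lam^2/θ^4)*v^2)) ∂ν)
        = 1 - (1/θ^2 + (3*lam^2/θ^4)*m₂) := by
      rw [integral_sub int2 (int_poly _ _ _), hsol, hpoly]
    have hbd := keybd (fun v => 1/(lam*v-θ)^2 - (1/θ^2 + (2*lam/θ^3)*v + (3*lam^2/θ^4)*v^2))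
      (112*M^3*lam^3) ?_
    · rw [hsplit] at hbd
      have h1 : 1/θ^2 + 3*lam^2*m₂/θ^4 - 1 = -(1 - (1/θ^2 + (3*lam^2/θ^4)*m₂)) := by ring
      rw [h1, abs_neg]
      exact hbd
    · intro v hv
      have ha2 := hha v hv
      have e : 1/(lam*v-θ)^2 - (1/θ^2 + (2*lam/θ^3)*v + (3*lam^2/θ^4)*v^2)
          = (lam*v)^3*(4*θ-3*(lam*v))/(θ^4*(θ-lam*v)^2) := by
        have := stmt7_alg2 θ (lam*v) hθ0 (by linarith)
        calc 1/(lam*v-θ)^2 - (1/θ^2 + (2*lam/θ^3)*v + (3*lam^2/θ^4)*v^2)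
            = 1/(lam*v-θ)^2 - (1/θ^2 + 2*(lam*v)/θ^3 + 3*(lam*v)^2/θ^4) := by ring
        _ = (lam*v)^3*(4*θ-3*(lam*v))/(θ^4*(θ-lam*v)^2) := this
      rw [e]
      have := stmt7_bd2 θ (lam*v) (lam*M) hθ34 hθ54 ha2 (hXb v hv) hlamM
      calc |(lam*v)^3*(4*θ-3*(lam*v))/(θ^4*(θ-lam*v)^2)| ≤ 112*(lam*M)^3 := this
      _ = 112*M^3*lam^3 := by ring
  -- first-order expansion of the Stieltjes transform
  set m : ℝ := ∫ v, 1 / (lam * v - θ) ∂ν with hmdef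
  have hI1 : |m + (1/θ + lam^2*m₂/θ^3)| ≤ 8*M^3*lam^3 := by
    have hsplit : (∫ v, (1/(lam*v-θ) + (1/θ + (lam/θ^2)*v + (lam^2/θ^3)*v^2)) ∂ν)
        = m + (1/θ + (lam^2/θ^3)*m₂) := by
      rw [integral_add int1 (int_poly _ _ _), hpoly, hmdef]
    have hbd := keybd (fun v => 1/(lam*v-θ) + (1/θ + (lam/θ^2)*v + (lam^2/θ^3)*v^2))
      (8*M^3*lam^3) ?_
    · rw [hsplit] at hbd
      have h1 : m + (1/θ + (lam^2/θ^3)*m₂) = m + (1/θ + lam^2*m₂/θ^3) := by ring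
      rw [h1] at hbd
      exact hbd
    · intro v hv
      have ha2 := hha v hv
      have e : 1/(lam*v-θ) + (1/θ + (lam/θ^2)*v + (lam^2/θ^3)*v^2)
          = -((lam*v)^3/(θ^3*(θ-lam*v))) := by
        have := stmt7_alg1 θ (lam*v) hθ0 (by linarith)
        calc 1/(lam*v-θ) + (1/θ + (lam/θ^2)*v + (lam^2/θ^3)*v^2)
            = 1/(lam*v-θ) + (1/θ + (lam*v)/θ^2 + (lam*v)^2/θ^3) := by ring
        _ = -((lam*v)^3/(θ^3*(θ-lam*v))) := this
      rw [e, abs_neg]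
      have := stmt7_bd1 θ (lam*v) (lam*M) hθ34 hθ54 ha2 (hXb v hv) hlamM
      calc |(lam*v)^3/(θ^3*(θ-lam*v))| ≤ 8*(lam*M)^3 := this
      _ = 8*M^3*lam^3 := by ring
  exact stmt7_arith M lam m₂ θ m hM hlam hlam1 hlamM hm₂0 hm₂M hθ34 hθ54 hθ0 hI2 hI1

/-- Let `ν` be a centered compactly supported probability measure with
variance `m²(ν)`, `ϑ(λ)` the largest solution of `∫ dν(v)/(λv−ϑ)² = 1` with `ϑ − λv`
bounded below on `supp ν`, and `m_fc(E₊) = ∫ dν(v)/(λv − ϑ)`.  Then as `λ → 0⁺`,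
`m_fc(E₊) = −1 + (λ² m²)/2 + O(λ³)`, and consequently
`1 − (m_fc(E₊))² = λ² m² + O(λ³)`. -/
theorem stmt7
    (ν : Measure ℝ) (hprob : IsProbabilityMeasure ν)
    -- `s` is the (compact) topological support of `ν`
    (s : Set ℝ) (hs_closed : IsClosed s) (hs_full : ν sᶜ = 0)
    (hs_min : ∀ t : Set ℝ, IsClosed t → ν tᶜ = 0 → s ⊆ t)
    (hs_compact : IsCompact s)
    (hcentered : ∫ v, v ∂ν = 0)
    (ε c : ℝ) (hε : 0 < ε) (hc : 0 < c)
    (ϑ : ℝ → ℝ)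
    (hpos : ∀ lam ∈ Set.Ioo (0 : ℝ) ε, 0 < ϑ lam)
    (hsol : ∀ lam ∈ Set.Ioo (0 : ℝ) ε, ∫ v, 1 / (lam * v - ϑ lam) ^ 2 ∂ν = 1)
    (hmax : ∀ lam ∈ Set.Ioo (0 : ℝ) ε, ∀ t : ℝ,
      (∫ v, 1 / (lam * v - t) ^ 2 ∂ν) = 1 → t ≤ ϑ lam)
    (hgap : ∀ lam ∈ Set.Ioo (0 : ℝ) ε, ∀ v ∈ s, c ≤ ϑ lam - lam * v) :
    ((fun lam : ℝ => (∫ v, 1 / (lam * v - ϑ lam) ∂ν) -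
        (-1 + lam ^ 2 * (∫ v, v ^ 2 ∂ν) / 2))
      =O[𝓝[>] (0 : ℝ)] fun lam : ℝ => lam ^ 3) ∧
    ((fun lam : ℝ => (1 - (∫ v, 1 / (lam * v - ϑ lam) ∂ν) ^ 2) -
        lam ^ 2 * (∫ v, v ^ 2 ∂ν))
      =O[𝓝[>] (0 : ℝ)] fun lam : ℝ => lam ^ 3) := by
  have hae : ∀ᵐ v ∂ν, v ∈ s := by
    rw [MeasureTheory.ae_iff]
    exact hs_full
  obtain ⟨r, hr⟩ := hs_compact.isBounded.subset_closedBall (0:ℝ)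
  set M : ℝ := max r 1 with hMdef
  have hM : 1 ≤ M := le_max_right _ _
  have hM0 : 0 < M := lt_of_lt_of_le one_pos hM
  have hMs : ∀ v ∈ s, |v| ≤ M := by
    intro v hv
    have := hr hv
    rw [Metric.mem_closedBall, Real.dist_eq, sub_zero] at this
    exact this.trans (le_max_left _ _)
  set δ : ℝ := min ε (1/(4*M)) with hδdef
  have hδ0 : 0 < δ := lt_min hε (by positivity)
  have hmem : Set.Ioo (0:ℝ) δ ∈ 𝓝[>] (0:ℝ) :=
    Ioo_mem_nhdsGT_of_mem ⟨le_refl 0, hδ0⟩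
  have keyall : ∀ lam ∈ Set.Ioo (0:ℝ) δ,
      |(∫ v, 1 / (lam * v - ϑ lam) ∂ν) - (-1 + lam ^ 2 * (∫ v, v ^ 2 ∂ν) / 2)|
        ≤ 10^7 * M^10 * lam^3 ∧
      |(1 - (∫ v, 1 / (lam * v - ϑ lam) ∂ν) ^ 2) - lam ^ 2 * (∫ v, v ^ 2 ∂ν)|
        ≤ 10^7 * M^10 * lam^3 := by
    intro lam hlam
    have hlam0 : 0 < lam := hlam.1
    have hlamε : lam ∈ Set.Ioo (0:ℝ) ε := ⟨hlam0, lt_of_lt_of_le hlam.2 (min_le_left _ _)⟩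
    have hlamM : lam * M ≤ 1/4 := by
      have h1 : lam < 1/(4*M) := lt_of_lt_of_le hlam.2 (min_le_right _ _)
      rw [lt_div_iff₀ (by positivity)] at h1
      linarith
    exact stmt7_key ν hprob s hae hcentered M hM hMs c lam (ϑ lam) hc hlam0 hlamM
      (hpos lam hlamε) (hsol lam hlamε) (hgap lam hlamε)
  constructor
  · rw [Asymptotics.isBigO_iff]
    refine ⟨10^7 * M^10, ?_⟩
    filter_upwards [hmem] with lam hlam
    rw [Real.norm_eq_abs, Real.norm_eq_abs, abs_of_pos (pow_pos hlam.1 3)]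
    exact (keyall lam hlam).1
  · rw [Asymptotics.isBigO_iff]
    refine ⟨10^7 * M^10, ?_⟩
    filter_upwards [hmem] with lam hlam
    rw [Real.norm_eq_abs, Real.norm_eq_abs, abs_of_pos (pow_pos hlam.1 3)]
    exact (keyall lam hlam).2
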